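/- Let d ≥ 4 and let k be an integer with 2 ≤ k ≤ √d. Let E_1, …, E_k be pairwise mutually unbiased orthonormal bases of ℂ^d, and for each j let 𝒜_j ⊆ M_d(ℂ) be the complex linear span of the rank-one orthogonal projections onto the vectors of E_j. Let P ∈ M_d(ℂ) satisfy P = P* = P² and Tr(P) = 1, and suppose P − (1/d)·I = A_1 + ⋯ + A_k where each A_j ∈ 𝒜_j is Hermitian with Tr(A_j) = 0. For each j set t_j = (d/√(d−1))·√(Tr(A_j²)/d), and assume 0 < t_j < 1 for all j. If r is an index with t_r² ≥ 1/k, then every eigenvalue λ of the Hermitian matrix A_r satisfies λ ≤ λ_− or λ ≥ λ_+, where λ_± = (1/(2d))·(d − 2 ± √((d−2)² − 4(d−1)(k − 3 + 1/k))). -/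

import Mathlib

open Matrix

namespace SGAux
variable {d : ℕ}
noncomputable def toE {d : ℕ} (u : Fin d → ℂ) : EuclideanSpace ℂ (Fin d) := WithLp.toLp 2 u
lemma ip_eq (x y : EuclideanSpace ℂ (Fin d)) :
    (inner ℂ x y : ℂ) = star (x : Fin d → ℂ) ⬝ᵥ (y : Fin d → ℂ) := by
  simp [PiLp.inner_apply, dotProduct, RCLike.inner_apply, mul_comm]
lemma vmv_mulVec (x y v : Fin d → ℂ) : (vecMulVec x y).mulVec v = (y ⬝ᵥ v) • x := by
  ext i
  simp [vecMulVec_apply, mulVec, dotProduct, Finset.mul_sum, mul_assoc, mul_comm, mul_left_comm]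
lemma vmv_mul_vmv (x u y w : Fin d → ℂ) :
    vecMulVec x u * vecMulVec y w = (u ⬝ᵥ y) • vecMulVec x w := by
  ext i l
  simp only [mul_apply, vecMulVec_apply, Matrix.smul_apply, dotProduct, smul_eq_mul, Finset.sum_mul,
    Finset.mul_sum]
  congr 1; ext m; ring
lemma trace_vmv (x y : Fin d → ℂ) : (vecMulVec x y).trace = x ⬝ᵥ y := by
  simp [Matrix.trace, Matrix.diag, vecMulVec_apply, dotProduct]
lemma star_dot_mulVec (M : Matrix (Fin d) (Fin d) ℂ) (x w : Fin d → ℂ) :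
    star (M.mulVec x) ⬝ᵥ w = star x ⬝ᵥ (Mᴴ.mulVec w) := by
  simp only [dotProduct, mulVec, Pi.star_apply, conjTranspose_apply, star_sum,
    star_mul', Finset.sum_mul, Finset.mul_sum]
  rw [Finset.sum_comm]
  congr 1; ext j; congr 1; ext i; ring
lemma conj_dot (x y : Fin d → ℂ) : (starRingEnd ℂ) (star x ⬝ᵥ y) = star y ⬝ᵥ x := by
  simp [dotProduct, map_sum, mul_comm]
lemma msum_mulVec {ι : Type*} (s : Finset ι) (f : ι → Matrix (Fin d) (Fin d) ℂ) (x : Fin d → ℂ) :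
    (∑ j ∈ s, f j).mulVec x = ∑ j ∈ s, (f j).mulVec x := by
  ext i
  simp [mulVec, dotProduct, Matrix.sum_apply, Finset.sum_mul, Finset.sum_apply]
  rw [Finset.sum_comm]
lemma dot_sum {ι : Type*} (s : Finset ι) (x : Fin d → ℂ) (f : ι → Fin d → ℂ) :
    x ⬝ᵥ (∑ j ∈ s, f j) = ∑ j ∈ s, x ⬝ᵥ f j := by
  simp only [dotProduct, Finset.sum_apply, Finset.mul_sum]
  rw [Finset.sum_comm]
lemma toE_sum {ι : Type*} (s : Finset ι) (f : ι → (Fin d → ℂ)) :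
    toE (∑ j ∈ s, f j) = ∑ j ∈ s, toE (f j) := WithLp.toLp_sum ..
lemma toE_sub (x y : Fin d → ℂ) : toE (x - y) = toE x - toE y := rfl
lemma toE_smul (a : ℂ) (x : Fin d → ℂ) : toE (a • x) = a • toE x := rfl
end SGAux

open SGAux

set_option maxHeartbeats 1200000

/-- The spectral-gap lemma: for `d ≥ 4`, `2 ≤ k ≤ √d`, pairwise mutually
unbiased orthonormal bases `E 1, …, E k` of `ℂ^d` with associated MASAs
`𝒜_j = span{rank-one projections onto the vectors of E j}`, if a rank-one orthogonal
projection `P` has traceless part decomposed as `P - (1/d)·I = A 1 + ⋯ + A k` with each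
`A j ∈ 𝒜_j` Hermitian and traceless, with all length ratios `t j ∈ (0,1)`, then for any
index `r` with `t r ² ≥ 1/k`, every eigenvalue `λ` of `A r` satisfies `λ ≤ λ₋` or `λ ≥ λ₊`. -/
theorem spectral_gap_lemma
    (d k : ℕ) (hd : 4 ≤ d) (hk2 : 2 ≤ k) (hk : (k : ℝ) ≤ Real.sqrt d)
    (E : Fin k → Fin d → EuclideanSpace ℂ (Fin d))
    (horth : ∀ j, Orthonormal ℂ (E j))
    (hmub : ∀ j j' : Fin k, j ≠ j' → ∀ a b : Fin d,
      ‖(inner ℂ (E j a) (E j' b) : ℂ)‖ ^ 2 = 1 / (d : ℝ))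
    (A : Fin k → Matrix (Fin d) (Fin d) ℂ)
    (hAmem : ∀ j, A j ∈ Submodule.span ℂ
      {M : Matrix (Fin d) (Fin d) ℂ | ∃ a, M = Matrix.vecMulVec (E j a) (star (E j a))})
    (hAherm : ∀ j, A j = (A j)ᴴ)
    (hAtraceless : ∀ j, (A j).trace = 0)
    (P : Matrix (Fin d) (Fin d) ℂ)
    (hP1 : P = Pᴴ) (hP2 : P = P * P) (hP3 : P.trace = 1)
    (hdecomp : P - (1 / (d : ℂ)) • 1 = ∑ j, A j)
    (t : Fin k → ℝ)
    (ht : ∀ j, t j = ((d : ℝ) / Real.sqrt ((d : ℝ) - 1)) *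
      Real.sqrt (((A j ^ 2).trace.re) / (d : ℝ)))
    (ht01 : ∀ j, 0 < t j ∧ t j < 1)
    (r : Fin k) (htr : 1 / (k : ℝ) ≤ t r ^ 2)
    (lam : ℝ) (v : Fin d → ℂ) (hv : v ≠ 0)
    (heig : (A r).mulVec v = (lam : ℂ) • v) :
    lam ≤ (1 / (2 * (d : ℝ))) * ((d : ℝ) - 2 -
        Real.sqrt (((d : ℝ) - 2) ^ 2 - 4 * ((d : ℝ) - 1) * ((k : ℝ) - 3 + 1 / (k : ℝ)))) ∨
    (1 / (2 * (d : ℝ))) * ((d : ℝ) - 2 +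
        Real.sqrt (((d : ℝ) - 2) ^ 2 - 4 * ((d : ℝ) - 1) * ((k : ℝ) - 3 + 1 / (k : ℝ)))) ≤ lam := by
  classical
  -- coefficients
  have hex : ∀ j, ∃ c : Fin d → ℂ,
      ∑ a, c a • Matrix.vecMulVec (E j a) (star (E j a)) = A j := by
    intro j
    have h := hAmem j
    have hset : {M : Matrix (Fin d) (Fin d) ℂ | ∃ a, M = Matrix.vecMulVec (E j a) (star (E j a))}
        = Set.range (fun a => Matrix.vecMulVec (E j a) (star (E j a))) := by
      ext M; simp [Set.range, eq_comm]
    rw [hset] at h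
    exact (Submodule.mem_span_range_iff_exists_fun ℂ).mp h
  choose c hc using hex
  -- orthonormality in dot-product form
  have horth' : ∀ j (a b : Fin d),
      star (E j a : Fin d → ℂ) ⬝ᵥ (E j b : Fin d → ℂ) = if a = b then 1 else 0 := by
    intro j a b
    rw [← ip_eq]
    exact orthonormal_iff_ite.mp (horth j) a b
  -- MUB in dot-product form
  have hmub' : ∀ {j j' : Fin k}, j ≠ j' → ∀ (a b : Fin d),
      (star (E j a : Fin d → ℂ) ⬝ᵥ (E j' b : Fin d → ℂ))
        * (star (E j' b : Fin d → ℂ) ⬝ᵥ (E j a : Fin d → ℂ)) = ((d : ℂ))⁻¹ := by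
    intro j j' hjj a b
    have h1 := hmub j j' hjj a b
    have h2 : (star (E j' b : Fin d → ℂ) ⬝ᵥ (E j a : Fin d → ℂ))
        = (starRingEnd ℂ) (star (E j a : Fin d → ℂ) ⬝ᵥ (E j' b : Fin d → ℂ)) :=
      (conj_dot _ _).symm
    rw [h2, ← ip_eq, Complex.mul_conj]
    rw [← Complex.sq_norm, h1]
    push_cast
    ring
  -- mulVec formula
  have hAmul : ∀ j (u : Fin d → ℂ), (A j).mulVec u
      = ∑ a, (c j a * (star (E j a : Fin d → ℂ) ⬝ᵥ u)) • (E j a : Fin d → ℂ) := by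
    intro j u
    rw [← hc j, msum_mulVec]
    refine Finset.sum_congr rfl fun a _ => ?_
    rw [Matrix.smul_mulVec, vmv_mulVec, smul_smul]
  -- expansion coefficient extraction
  have hexp : ∀ (j : Fin k) (α : Fin d → ℂ) (b : Fin d),
      star (E j b : Fin d → ℂ) ⬝ᵥ (∑ a, α a • (E j a : Fin d → ℂ)) = α b := by
    intro j α b
    rw [dot_sum, Finset.sum_eq_single b]
    · rw [dotProduct_smul, horth']
      simp
    · intro a _ ha
      rw [dotProduct_smul, horth']
      simp [Ne.symm ha]
    · simp
  -- diagonal extraction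
  have hdiag : ∀ j a, star (E j a : Fin d → ℂ) ⬝ᵥ ((A j).mulVec (E j a)) = c j a := by
    intro j a
    rw [hAmul, hexp]
    simp [horth']
  -- realness of coefficients
  have hcreal : ∀ j a, (starRingEnd ℂ) (c j a) = c j a := by
    intro j a
    conv_lhs => rw [← hdiag j a]
    rw [conj_dot, star_dot_mulVec, ← hAherm j, hdiag]
  set g : Fin k → Fin d → ℝ := fun j a => (c j a).re with hg
  have hcg : ∀ j a, c j a = ((g j a : ℝ) : ℂ) := by
    intro j a
    exact (Complex.conj_eq_iff_re.mp (hcreal j a)).symm ▸ rfl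
  -- trace of rank-one projections
  have hW1 : ∀ j a, (Matrix.vecMulVec (E j a) (star (E j a))).trace = 1 := by
    intro j a
    rw [trace_vmv, dotProduct_comm]
    simpa using horth' j a a
  have hsumc : ∀ j, ∑ a, c j a = 0 := by
    intro j
    have h := hAtraceless j
    rw [← hc j, Matrix.trace_sum] at h
    simpa [Matrix.trace_smul, hW1, smul_eq_mul] using h
  -- square of A j
  have hA2 : ∀ j, A j * A j
      = ∑ b, ((c j b)^2) • Matrix.vecMulVec (E j b) (star (E j b)) := by
    intro j
    conv_lhs => rw [← hc j]
    rw [Finset.sum_mul_sum]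
    refine Finset.sum_congr rfl fun a _ => ?_
    rw [Finset.sum_eq_single a]
    · rw [Matrix.smul_mul, Matrix.mul_smul, vmv_mul_vmv, horth']
      simp [smul_smul, sq]
    · intro b _ hb
      rw [Matrix.smul_mul, Matrix.mul_smul, vmv_mul_vmv, horth']
      simp [Ne.symm hb]
    · simp
  have htrA2 : ∀ j, (A j ^ 2).trace = ((∑ a, (g j a)^2 : ℝ) : ℂ) := by
    intro j
    rw [pow_two, hA2 j, Matrix.trace_sum]
    push_cast
    refine Finset.sum_congr rfl fun a _ => ?_
    rw [Matrix.trace_smul, hW1, hcg j a]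
    rw [smul_eq_mul, mul_one]
  have htrcross : ∀ j j', j ≠ j' → (A j * A j').trace = 0 := by
    intro j j' hjj
    have hterm : ∀ a b, ((c j a • Matrix.vecMulVec (E j a) (star (E j a)))
        * (c j' b • Matrix.vecMulVec (E j' b) (star (E j' b)))).trace
        = c j a * c j' b * (d:ℂ)⁻¹ := by
      intro a b
      rw [Matrix.smul_mul, Matrix.mul_smul, vmv_mul_vmv]
      simp only [smul_smul, Matrix.trace_smul]
      rw [show (Matrix.vecMulVec (E j a : Fin d → ℂ) (star (E j' b)) : Matrix (Fin d) (Fin d) ℂ).trace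
          = star (E j' b : Fin d → ℂ) ⬝ᵥ (E j a : Fin d → ℂ) from by
        rw [trace_vmv, dotProduct_comm], smul_eq_mul]
      have h := hmub' hjj a b
      linear_combination (c j a * c j' b) * h
    conv_lhs => rw [← hc j, ← hc j']
    rw [Finset.sum_mul_sum]
    simp only [Matrix.trace_sum]
    calc ∑ a, ∑ b, ((c j a • Matrix.vecMulVec (E j a) (star (E j a)))
            * (c j' b • Matrix.vecMulVec (E j' b) (star (E j' b)))).trace
        = ∑ a, ∑ b, c j a * c j' b * (d:ℂ)⁻¹ := by
          exact Finset.sum_congr rfl fun a _ => Finset.sum_congr rfl fun b _ => hterm a b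
      _ = 0 := by
          simp only [mul_assoc, ← Finset.mul_sum]
          rw [← Finset.sum_mul, hsumc, zero_mul]
  -- total trace identity
  have hTT : ((∑ j, A j) * (∑ j, A j)).trace = ((∑ j, ∑ a, (g j a)^2 : ℝ) : ℂ) := by
    rw [Finset.sum_mul_sum]
    simp only [Matrix.trace_sum]
    rw [show ((∑ j, ∑ a, (g j a)^2 : ℝ) : ℂ) = ∑ j, ((∑ a, (g j a)^2 : ℝ) : ℂ) from by
      norm_cast]
    refine Finset.sum_congr rfl fun j _ => ?_
    rw [Finset.sum_eq_single j]
    · rw [← pow_two]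
      exact htrA2 j
    · intro j' _ hj'
      exact htrcross j j' (Ne.symm hj')
    · simp
  have hdC : (d:ℂ) ≠ 0 := Nat.cast_ne_zero.mpr (by omega)
  have hsumS : ∑ j, ∑ a, (g j a)^2 = 1 - 1/(d:ℝ) := by
    have h1 : ((∑ j, A j) * (∑ j, A j)).trace = 1 - 1/(d:ℂ) := by
      rw [← hdecomp, sub_mul, mul_sub, mul_sub]
      simp only [Matrix.trace_sub, Matrix.smul_mul, Matrix.mul_smul, Matrix.one_mul,
        Matrix.mul_one, Matrix.trace_smul, ← hP2, hP3, smul_smul, Matrix.trace_one]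
      field_simp
      simp only [smul_eq_mul, mul_one, Fintype.card_fin]
      field_simp
      ring
    rw [hTT] at h1
    have h2 : ((∑ j, ∑ a, (g j a)^2 : ℝ) : ℂ) = ((1 - 1/(d:ℝ) : ℝ) : ℂ) := by
      rw [h1]; push_cast; ring
    exact_mod_cast h2
  -- real scalars
  have hDR : (4:ℝ) ≤ (d:ℝ) := by exact_mod_cast hd
  have hKR : (2:ℝ) ≤ (k:ℝ) := by exact_mod_cast hk2
  have hD0 : (0:ℝ) < (d:ℝ) := by linarith
  have hK0 : (0:ℝ) < (k:ℝ) := by linarith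
  have hD1 : (0:ℝ) < (d:ℝ) - 1 := by linarith
  have hS0 : ∀ j, (0:ℝ) ≤ ∑ a, (g j a)^2 := fun j => Finset.sum_nonneg fun a _ => sq_nonneg _
  have htre : ∀ j, (A j ^ 2).trace.re = ∑ a, (g j a)^2 := by
    intro j; rw [htrA2 j]; simp [← Complex.ofReal_pow]
  have hSt : ∀ j, ∑ a, (g j a)^2 = ((d:ℝ) - 1) * (t j)^2 / d := by
    intro j
    have h := ht j
    rw [htre] at h
    have h2 : t j ^ 2 = ((d:ℝ)/Real.sqrt ((d:ℝ)-1))^2 * (Real.sqrt ((∑ a, (g j a)^2) / d))^2 := by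
      rw [h]; ring
    rw [Real.sq_sqrt (by positivity), div_pow, Real.sq_sqrt hD1.le] at h2
    rw [h2]
    field_simp
  have hSr : ((d:ℝ)-1) / ((d:ℝ) * k) ≤ ∑ a, (g r a)^2 := by
    rw [hSt r]
    rw [div_le_div_iff₀ (by positivity) hD0]
    have h4 : 1 ≤ t r ^ 2 * (k:ℝ) := by
      rw [div_le_iff₀ hK0] at htr
      linarith
    nlinarith [mul_le_mul_of_nonneg_left h4 (by positivity : (0:ℝ) ≤ ((d:ℝ)-1) * d)]
  -- find the eigenvalue index
  obtain ⟨a₀, hlam⟩ : ∃ a₀, c r a₀ = ((lam : ℝ) : ℂ) := by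
    have hvE : ∃ b, (star (E r b : Fin d → ℂ)) ⬝ᵥ v ≠ 0 := by
      by_contra hall
      push_neg at hall
      haveI : Nonempty (Fin d) := ⟨⟨0, by omega⟩⟩
      have hli := (horth r).linearIndependent
      have hcard : Fintype.card (Fin d) = Module.finrank ℂ (EuclideanSpace ℂ (Fin d)) := by
        simp [finrank_euclideanSpace]
      have hob : ⊤ ≤ Submodule.span ℂ (Set.range (E r)) :=
        (hli.span_eq_top_of_card_eq_finrank hcard).ge
      have hz : ∀ b, (OrthonormalBasis.mk (horth r) hob).repr (toE v) b = 0 := by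
        intro b
        rw [OrthonormalBasis.repr_apply_apply]
        rw [show ((OrthonormalBasis.mk (horth r) hob) b : EuclideanSpace ℂ (Fin d)) = E r b from by
          rw [OrthonormalBasis.coe_mk]]
        rw [ip_eq]
        exact hall b
      have hz2 : toE v = 0 := by
        have h0 : (OrthonormalBasis.mk (horth r) hob).repr (toE v) = 0 := by
          ext b; simpa using hz b
        exact (LinearIsometryEquiv.map_eq_zero_iff _).mp h0
      exact hv (by simpa [toE] using hz2)
    obtain ⟨b, hb⟩ := hvE
    refine ⟨b, ?_⟩
    have h1 : star (E r b : Fin d → ℂ) ⬝ᵥ ((A r).mulVec v)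
        = c r b * (star (E r b : Fin d → ℂ) ⬝ᵥ v) := by
      rw [hAmul]
      exact hexp r _ b
    rw [heig, dotProduct_smul, smul_eq_mul] at h1
    exact (mul_right_cancel₀ hb h1).symm
  -- A r fixes E r a₀
  have hAre : (A r).mulVec (E r a₀ : Fin d → ℂ) = ((lam:ℝ):ℂ) • (E r a₀ : Fin d → ℂ) := by
    rw [hAmul]
    rw [Finset.sum_eq_single a₀]
    · rw [horth']
      simp [hlam]
    · intro b _ hb
      rw [horth']
      simp [hb]
    · simp
  -- cross terms vanish in expectation
  have hzero : ∀ j, j ≠ r → star (E r a₀ : Fin d → ℂ) ⬝ᵥ ((A j).mulVec (E r a₀)) = 0 := by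
    intro j hj
    rw [hAmul, dot_sum]
    have hterm : ∀ b, star (E r a₀ : Fin d → ℂ) ⬝ᵥ
        ((c j b * (star (E j b : Fin d → ℂ) ⬝ᵥ (E r a₀ : Fin d → ℂ))) • (E j b : Fin d → ℂ))
        = c j b * (d:ℂ)⁻¹ := by
      intro b
      rw [dotProduct_smul, smul_eq_mul]
      have h := hmub' (Ne.symm hj) a₀ b
      linear_combination (c j b) * h
    rw [Finset.sum_congr rfl fun b _ => hterm b]
    rw [← Finset.sum_mul, hsumc, zero_mul]
  -- expectation of P
  have hPdec : P = (∑ j, A j) + (1/(d:ℂ)) • (1 : Matrix (Fin d) (Fin d) ℂ) := by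
    rw [← hdecomp]; abel
  have hPe := congrArg (fun M : Matrix (Fin d) (Fin d) ℂ => M.mulVec (E r a₀ : Fin d → ℂ)) hPdec
  simp only [Matrix.add_mulVec, Matrix.smul_mulVec, Matrix.one_mulVec, msum_mulVec] at hPe
  have hqPe : star (E r a₀ : Fin d → ℂ) ⬝ᵥ (P.mulVec (E r a₀))
      = (((lam + 1/(d:ℝ)) : ℝ) : ℂ) := by
    rw [hPe, dotProduct_add, dot_sum]
    rw [Finset.sum_eq_single r]
    · rw [hdiag, hlam, dotProduct_smul, horth']
      push_cast
      simp
    · intro j _ hj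
      exact hzero j hj
    · simp
  -- replace the Euclidean basis vector by an honest function
  obtain ⟨e0, he0⟩ : ∃ e0 : Fin d → ℂ, e0 = (E r a₀ : Fin d → ℂ) := ⟨_, rfl⟩
  rw [← he0] at hqPe hAre hPe
  -- norm facts
  have hnorme : ‖toE e0‖ = 1 := by rw [he0]; exact (horth r).1 a₀
  have hq2 : (inner ℂ (toE (P.mulVec e0)) (toE (P.mulVec e0)) : ℂ)
      = (((lam + 1/(d:ℝ)) : ℝ) : ℂ) := by
    rw [ip_eq]
    simp only [toE]
    rw [show star (P.mulVec e0) ⬝ᵥ (P.mulVec e0)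
        = star e0 ⬝ᵥ ((Pᴴ * P).mulVec e0) from by
      rw [star_dot_mulVec, Matrix.mulVec_mulVec]]
    rw [show Pᴴ * P = P from by rw [← hP1, ← hP2]]
    exact hqPe
  have huu : ‖toE (P.mulVec e0)‖^2 = lam + 1/(d:ℝ) := by
    have h := inner_self_eq_norm_sq (𝕜 := ℂ) (toE (P.mulVec e0))
    rw [hq2] at h
    simpa using h.symm
  have hq0 : 0 ≤ lam + 1/(d:ℝ) := by rw [← huu]; positivity
  have hq1c : (inner ℂ (toE e0) (toE (P.mulVec e0)) : ℂ)
      = (((lam + 1/(d:ℝ)) : ℝ) : ℂ) := by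
    rw [ip_eq]
    simp only [toE]
    exact hqPe
  have hqle1 : lam + 1/(d:ℝ) ≤ 1 := by
    have h2 : lam + 1/(d:ℝ) ≤ ‖(inner ℂ (toE e0) (toE (P.mulVec e0)) : ℂ)‖ := by
      rw [hq1c, Complex.norm_real]
      exact le_abs_self _
    have h3 := norm_inner_le_norm (𝕜 := ℂ) (toE e0) (toE (P.mulVec e0))
    rw [hnorme, one_mul] at h3
    nlinarith [sq_nonneg (‖toE (P.mulVec e0)‖ - 1), huu, h2, h3]
  -- sum over the erased set
  have hXe : ∑ j ∈ Finset.univ.erase r, toE ((A j).mulVec e0)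
      = toE (P.mulVec e0) - (((lam + 1/(d:ℝ)):ℝ):ℂ) • toE e0 := by
    have h1 : ∑ j ∈ Finset.univ.erase r, (A j).mulVec e0
        = (∑ j, (A j).mulVec e0) - (A r).mulVec e0 :=
      eq_sub_of_add_eq (Finset.sum_erase_add Finset.univ _ (Finset.mem_univ r))
    have h3 : (((lam + 1/(d:ℝ)):ℝ):ℂ) • e0 = ((lam:ℝ):ℂ) • e0 + (1/(d:ℂ)) • e0 := by
      rw [← add_smul]
      congr 1
      push_cast
      ring
    have h2 : (∑ j ∈ Finset.univ.erase r, (A j).mulVec e0)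
        = P.mulVec e0 - (((lam + 1/(d:ℝ)):ℝ):ℂ) • e0 := by
      rw [h1, hAre, hPe, h3]
      rw [add_sub_add_right_eq_sub]
    rw [← toE_sum, h2, toE_sub, toE_smul]
  have hXnorm2 : ‖toE (P.mulVec e0) - (((lam + 1/(d:ℝ)):ℝ):ℂ) • toE e0‖^2
      = (lam + 1/(d:ℝ)) * (1 - (lam + 1/(d:ℝ))) := by
    rw [norm_sub_sq (𝕜 := ℂ)]
    rw [inner_smul_right, ← inner_conj_symm, hq1c, Complex.conj_ofReal]
    rw [huu, norm_smul, hnorme, Complex.norm_real]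
    rw [show (((lam + 1/(d:ℝ)):ℝ):ℂ) * (((lam + 1/(d:ℝ)):ℝ):ℂ)
        = ((((lam + 1/(d:ℝ)) * (lam + 1/(d:ℝ))):ℝ):ℂ) from by push_cast; ring]
    rw [RCLike.re_to_complex, Complex.ofReal_re]
    rw [Real.norm_eq_abs, abs_of_nonneg hq0]
    ring
  have htri : ‖toE (P.mulVec e0) - (((lam + 1/(d:ℝ)):ℝ):ℂ) • toE e0‖
      ≤ ∑ j ∈ Finset.univ.erase r, ‖toE ((A j).mulVec e0)‖ := by
    rw [← hXe]
    exact norm_sum_le _ _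
  -- length of each A j e0
  have hAj2 : ∀ j, j ≠ r → ‖toE ((A j).mulVec e0)‖^2 = (∑ a, (g j a)^2)/(d:ℝ) := by
    intro j hj
    have h1 : (inner ℂ (toE ((A j).mulVec e0)) (toE ((A j).mulVec e0)) : ℂ)
        = ((((∑ a, (g j a)^2)/(d:ℝ)) : ℝ):ℂ) := by
      rw [ip_eq]
      simp only [toE]
      rw [show star ((A j).mulVec e0) ⬝ᵥ ((A j).mulVec e0)
          = star e0 ⬝ᵥ (((A j)ᴴ * (A j)).mulVec e0) from by
        rw [star_dot_mulVec, Matrix.mulVec_mulVec]]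
      rw [← hAherm j, hA2 j, msum_mulVec, dot_sum, he0]
      have hterm : ∀ b, star (E r a₀ : Fin d → ℂ) ⬝ᵥ
          (((c j b)^2 • Matrix.vecMulVec (E j b) (star (E j b))).mulVec (E r a₀ : Fin d → ℂ))
          = (c j b)^2 * (d:ℂ)⁻¹ := by
        intro b
        rw [Matrix.smul_mulVec, vmv_mulVec, dotProduct_smul, dotProduct_smul,
          smul_eq_mul, smul_eq_mul]
        have h := hmub' (Ne.symm hj) a₀ b
        linear_combination (c j b)^2 * h
      rw [Finset.sum_congr rfl fun b _ => hterm b, ← Finset.sum_mul]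
      rw [show (∑ b, (c j b)^2) = ((∑ b, (g j b)^2 : ℝ):ℂ) from by
        rw [show (∑ b, (c j b)^2) = ∑ b, ((g j b : ℝ):ℂ)^2 from
          Finset.sum_congr rfl fun b _ => by rw [hcg]]
        push_cast
        rfl]
      rw [show ((∑ b, (g j b)^2 : ℝ):ℂ) * ((d:ℂ))⁻¹
          = ((((∑ b, (g j b)^2)/(d:ℝ)) : ℝ):ℂ) from by push_cast; ring]
    have h2 := inner_self_eq_norm_sq (𝕜 := ℂ) (toE ((A j).mulVec e0))
    rw [h1] at h2
    rw [← h2, RCLike.re_to_complex, Complex.ofReal_re]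
  have hAjn : ∀ j, j ≠ r → ‖toE ((A j).mulVec e0)‖
      = Real.sqrt ((∑ a, (g j a)^2)/(d:ℝ)) := by
    intro j hj
    rw [← hAj2 j hj, Real.sqrt_sq (norm_nonneg _)]
  -- Cauchy-Schwarz for the sum of square roots
  have hcard : ((Finset.univ.erase r).card : ℝ) = (k:ℝ) - 1 := by
    rw [Finset.card_erase_of_mem (Finset.mem_univ r), Finset.card_univ, Fintype.card_fin]
    push_cast [Nat.cast_sub (by omega : 1 ≤ k)]
    ring
  have hCS : (∑ j ∈ Finset.univ.erase r, Real.sqrt ((∑ a, (g j a)^2)/(d:ℝ)))^2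
      ≤ ((k:ℝ) - 1) * ∑ j ∈ Finset.univ.erase r, (∑ a, (g j a)^2)/(d:ℝ) := by
    have h := sq_sum_le_card_mul_sum_sq
      (s := Finset.univ.erase r) (f := fun j => Real.sqrt ((∑ a, (g j a)^2)/(d:ℝ)))
    rw [show (∑ j ∈ Finset.univ.erase r, (Real.sqrt ((∑ a, (g j a)^2)/(d:ℝ)))^2)
        = ∑ j ∈ Finset.univ.erase r, (∑ a, (g j a)^2)/(d:ℝ) from
      Finset.sum_congr rfl fun j _ => Real.sq_sqrt (div_nonneg (hS0 j) hD0.le)] at h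
    rw [hcard] at h
    exact h
  have hsum_erase : ∑ j ∈ Finset.univ.erase r, (∑ a, (g j a)^2)
      = (1 - 1/(d:ℝ)) - ∑ a, (g r a)^2 := by
    have h := Finset.sum_erase_add Finset.univ (fun j => ∑ a, (g j a)^2) (Finset.mem_univ r)
    rw [hsumS] at h
    linarith
  -- master inequality
  have hmaster : (lam + 1/(d:ℝ)) * (1 - (lam + 1/(d:ℝ)))
      ≤ ((k:ℝ)-1)^2 * ((d:ℝ)-1) / ((d:ℝ)^2 * k) := by
    have e1 : (lam + 1/(d:ℝ)) * (1 - (lam + 1/(d:ℝ)))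
        ≤ (∑ j ∈ Finset.univ.erase r, Real.sqrt ((∑ a, (g j a)^2)/(d:ℝ)))^2 := by
      rw [← hXnorm2]
      rw [show (∑ j ∈ Finset.univ.erase r, Real.sqrt ((∑ a, (g j a)^2)/(d:ℝ)))
          = ∑ j ∈ Finset.univ.erase r, ‖toE ((A j).mulVec e0)‖ from
        (Finset.sum_congr rfl fun j hjm => (hAjn j (Finset.ne_of_mem_erase hjm))).symm]
      have hnn := norm_nonneg (toE (P.mulVec e0) - (((lam + 1/(d:ℝ)):ℝ):ℂ) • toE e0)
      nlinarith [htri, hnn]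
    have e3 : ∑ j ∈ Finset.univ.erase r, (∑ a, (g j a)^2)/(d:ℝ)
        = ((1 - 1/(d:ℝ)) - ∑ a, (g r a)^2)/(d:ℝ) := by
      rw [← Finset.sum_div, hsum_erase]
    have i1 : (1:ℝ) - 1/(d:ℝ) = ((d:ℝ)-1)/(d:ℝ) := by field_simp
    have e5 : ((1 - 1/(d:ℝ)) - ∑ a, (g r a)^2) ≤ ((d:ℝ)-1)/(d:ℝ) - ((d:ℝ)-1)/((d:ℝ)*k) := by
      rw [i1]
      linarith [hSr]
    have hk1 : (0:ℝ) ≤ (k:ℝ) - 1 := by linarith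
    have e6 : ((k:ℝ)-1) * ((((1:ℝ) - 1/(d:ℝ)) - ∑ a, (g r a)^2)/(d:ℝ))
        ≤ ((k:ℝ)-1) * ((((d:ℝ)-1)/(d:ℝ) - ((d:ℝ)-1)/((d:ℝ)*k))/(d:ℝ)) := by
      apply mul_le_mul_of_nonneg_left _ hk1
      exact div_le_div_of_nonneg_right e5 hD0.le
    calc (lam + 1/(d:ℝ)) * (1 - (lam + 1/(d:ℝ)))
        ≤ (∑ j ∈ Finset.univ.erase r, Real.sqrt ((∑ a, (g j a)^2)/(d:ℝ)))^2 := e1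
      _ ≤ ((k:ℝ) - 1) * ∑ j ∈ Finset.univ.erase r, (∑ a, (g j a)^2)/(d:ℝ) := hCS
      _ = ((k:ℝ) - 1) * ((((1:ℝ) - 1/(d:ℝ)) - ∑ a, (g r a)^2)/(d:ℝ)) := by rw [e3]
      _ ≤ ((k:ℝ)-1) * ((((d:ℝ)-1)/(d:ℝ) - ((d:ℝ)-1)/((d:ℝ)*k))/(d:ℝ)) := e6
      _ = ((k:ℝ)-1)^2 * ((d:ℝ)-1) / ((d:ℝ)^2 * k) := by
          field_simp
  -- endgame
  by_contra hcon
  push_neg at hcon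
  obtain ⟨h1, h2⟩ := hcon
  rcases le_or_gt (((d:ℝ)-2)^2 - 4*((d:ℝ)-1)*((k:ℝ)-3+1/(k:ℝ))) 0 with hneg | hpos
  · rw [Real.sqrt_eq_zero'.mpr hneg] at h1 h2
    linarith
  · have hs := Real.sq_sqrt hpos.le
    have h2D : (0:ℝ) < 2*(d:ℝ) := by linarith
    have hcan : ∀ X : ℝ, 2*(d:ℝ) * ((1 / (2 * (d:ℝ))) * X) = X := fun X => by
      rw [← mul_assoc, mul_one_div, div_self (ne_of_gt h2D), one_mul]
    have h1' := mul_lt_mul_of_pos_left h1 h2D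
    have h2' := mul_lt_mul_of_pos_left h2 h2D
    rw [hcan] at h1' h2'
    have hb : (2*(d:ℝ)*lam - ((d:ℝ)-2))^2
        < ((d:ℝ)-2)^2 - 4*((d:ℝ)-1)*((k:ℝ)-3+1/(k:ℝ)) := by
      rw [← hs]
      apply sq_lt_sq'
      · linarith
      · linarith
    have hexpand : (lam + 1/(d:ℝ)) * (1 - (lam + 1/(d:ℝ))) * ((d:ℝ)^2*(k:ℝ))
        = (k:ℝ)*(((d:ℝ)*lam+1) * ((d:ℝ)-1-(d:ℝ)*lam)) := by
      field_simp
      ring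
    have hm2 : (k:ℝ)*(((d:ℝ)*lam+1)*((d:ℝ)-1-(d:ℝ)*lam)) ≤ ((k:ℝ)-1)^2*((d:ℝ)-1) := by
      rw [← hexpand]
      have h5 := mul_le_mul_of_nonneg_right hmaster (by positivity : (0:ℝ) ≤ (d:ℝ)^2*(k:ℝ))
      calc (lam + 1/(d:ℝ)) * (1 - (lam + 1/(d:ℝ))) * ((d:ℝ)^2*(k:ℝ))
          ≤ ((k:ℝ)-1)^2*((d:ℝ)-1)/((d:ℝ)^2*k) * ((d:ℝ)^2*(k:ℝ)) := h5
        _ = ((k:ℝ)-1)^2*((d:ℝ)-1) := by field_simp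
    have hbk := mul_lt_mul_of_pos_left hb hK0
    have hKinv : (k:ℝ)*(1/(k:ℝ)) = 1 := by field_simp
    nlinarith [hm2, hbk, hKinv]
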